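/- Let d ≥ 4 and let A be an arbitrary deterministic stateless load-balancing algorithm for d-regular graphs, given by a function g : ℕ → ℕ^{d+1}, g(x) = (p⁰(x), p₁(x), …, p_d(x)), with p⁰(x) + Σ_{i=1}^d p_i(x) = x, where a node with current load x keeps p⁰(x) tokens and sends the d values p₁(x), …, p_d(x) along its d edges in some order. Then for every even n > 2d there exist a d-regular graph G on n vertices, an initial load distribution, and an execution of A on G (i.e., for every step and every node, a bijective assignment of the values p₁(x), …, p_d(x) to that node's d outgoing edges, where x is the node's current load) such that for every time step t the discrepancy equals ⌊d/2⌋ − 1; in particular A cannot achieve a discrepancy better than c·d for some universal constant c > 0. -/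

import Mathlib

open Finset

/-- A `d`-regular connected symmetric graph `G` together with `dSelf` self-loops
attached to every node (the balancing graph `G⁺`). -/
structure LBSetup (V : Type) [Fintype V] [DecidableEq V] where
  d : ℕ
  dSelf : ℕ
  Adj : V → V → Bool
  symm : ∀ u v : V, Adj u v → Adj v u
  loopless : ∀ u : V, ¬ Adj u u
  regular : ∀ u : V, (Finset.univ.filter fun v => Adj u v).card = d
  connected : ∀ u v : V, Relation.ReflTransGen (fun a b => Adj a b = true) u v

variable {V : Type} [Fintype V] [DecidableEq V]

/-- Degree `d⁺ = d + d°` of the balancing graph. -/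
def LBSetup.dPlus (S : LBSetup V) : ℕ := S.d + S.dSelf

/-- Neighbours of `u` in the original graph. -/
def LBSetup.nbrs (S : LBSetup V) (u : V) : Finset V :=
  Finset.univ.filter fun v => S.Adj u v

/-- A load-balancing algorithm on the balancing graph `G⁺`: integer flows on
original edges (`f`) and on self-loops (`g`), and load vectors `x`, satisfying
the conservation laws. Time steps start at `t = 1`. -/
structure LBAlgo (S : LBSetup V) where
  f : ℕ → V → V → ℕ
  g : ℕ → V → Fin S.dSelf → ℕ
  x : ℕ → V → ℕ
  flow_out : ∀ t, 1 ≤ t → ∀ u : V,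
    x t u = (∑ v ∈ S.nbrs u, f t u v) + ∑ i : Fin S.dSelf, g t u i
  flow_in : ∀ t, 1 ≤ t → ∀ u : V,
    x (t + 1) u = (∑ v ∈ S.nbrs u, f t v u) + ∑ i : Fin S.dSelf, g t u i

/-- Cumulative flow on the original edge `(u, v)` up to time `t`. -/
def LBAlgo.F {S : LBSetup V} (A : LBAlgo S) (t : ℕ) (u v : V) : ℕ :=
  ∑ τ ∈ Finset.Icc 1 t, A.f τ u v

/-- Cumulative flow on the `i`-th self-loop of `u` up to time `t`. -/
def LBAlgo.Gcum {S : LBSetup V} (A : LBAlgo S) (t : ℕ) (u : V) (i : Fin S.dSelf) : ℕ :=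
  ∑ τ ∈ Finset.Icc 1 t, A.g τ u i

/-- Cumulative δ-fairness: every edge (original or self-loop) of `u` carries at least
`⌊x_t(u)/d⁺⌋` tokens in every step, and cumulative flows on any two original edges
of `u` differ by at most `δ`. -/
def CumFair (S : LBSetup V) (A : LBAlgo S) (δ : ℝ) : Prop :=
  (∀ t, 1 ≤ t → ∀ u : V,
      (∀ v : V, S.Adj u v → A.x t u / S.dPlus ≤ A.f t u v) ∧
      (∀ i : Fin S.dSelf, A.x t u / S.dPlus ≤ A.g t u i)) ∧
  (∀ t : ℕ, ∀ u v w : V, S.Adj u v → S.Adj u w →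
      |(A.F t u v : ℝ) - (A.F t u w : ℝ)| ≤ δ)

/-- Maximum load at time `t`. -/
def maxLoad {S : LBSetup V} [Nonempty V] (A : LBAlgo S) (t : ℕ) : ℕ :=
  Finset.univ.sup' Finset.univ_nonempty (A.x t)

/-- Minimum load at time `t`. -/
def minLoad {S : LBSetup V} [Nonempty V] (A : LBAlgo S) (t : ℕ) : ℕ :=
  Finset.univ.inf' Finset.univ_nonempty (A.x t)

/-- Discrepancy at time `t`. -/
def disc {S : LBSetup V} [Nonempty V] (A : LBAlgo S) (t : ℕ) : ℕ :=
  maxLoad A t - minLoad A t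

/-- Transition matrix `P` of the balancing graph `G⁺`. -/
noncomputable def LBSetup.P (S : LBSetup V) : Matrix V V ℝ :=
  Matrix.of fun u v =>
    if S.Adj u v then (1 : ℝ) / S.dPlus
    else if u = v then (S.dSelf : ℝ) / S.dPlus else 0

/-- `μ` is the eigenvalue gap of `P`: `μ = 1 - λ₂` where `λ₂` is the
largest eigenvalue of `P` different from `1`. -/
def LBSetup.IsEigGap (S : LBSetup V) (μ : ℝ) : Prop :=
  ∃ lam : ℝ, μ = 1 - lam ∧ lam ∈ spectrum ℝ S.P ∧ lam ≠ 1 ∧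
    ∀ x ∈ spectrum ℝ S.P, x ≠ 1 → x ≤ lam


section AuxEquiv

open Finset

lemma exists_equiv_cond {α : Type*} [Fintype α] [DecidableEq α] {d : ℕ}
    (hcard : Fintype.card α = d) (P : α → Prop) [DecidablePred P]
    (Q : Fin d → Prop) [DecidablePred Q]
    (hle : (univ.filter P).card ≤ (univ.filter Q).card) :
    ∃ e : α ≃ Fin d, ∀ a, P a → Q (e a) := by
  classical
  obtain ⟨T, hTsub, hTcard⟩ := Finset.exists_subset_card_eq hle
  have h1 : Fintype.card {a // P a} = Fintype.card {i // i ∈ T} := by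
    simp [Fintype.card_subtype, hTcard]
  have h2 : Fintype.card {a // ¬ P a} = Fintype.card {i // ¬ i ∈ T} := by
    rw [Fintype.card_subtype_compl, Fintype.card_subtype_compl, hcard,
      Fintype.card_fin, h1]
  let e1 : {a // P a} ≃ {i // i ∈ T} := Fintype.equivOfCardEq h1
  let e2 : {a // ¬ P a} ≃ {i // ¬ i ∈ T} := Fintype.equivOfCardEq h2
  refine ⟨(Equiv.sumCompl P).symm.trans ((e1.sumCongr e2).trans
    (Equiv.sumCompl (· ∈ T))), ?_⟩
  intro a ha
  rw [Equiv.trans_apply, Equiv.trans_apply,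
    Equiv.sumCompl_symm_apply_of_pos ha, Equiv.sumCongr_apply, Sum.map_inl,
    Equiv.sumCompl_apply_inl]
  have hmem := hTsub (e1 ⟨a, ha⟩).2
  simpa using hmem

end AuxEquiv

open Fin.NatCast Fin.CommRing

section SSet

open Finset

variable (n d : ℕ) [NeZero n]

/-- the `k`-th offset of the circulant graph: `±(k/2+1)` -/
def offF (k : ℕ) : Fin n :=
  if k % 2 = 0 then ((k / 2 + 1 : ℕ) : Fin n) else -((k / 2 + 1 : ℕ) : Fin n)

/-- the set of offsets of the circulant graph -/
def SS : Finset (Fin n) :=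
  (Finset.range (2 * (d / 2))).image (offF n) ∪
    (if d % 2 = 1 then {((n / 2 : ℕ) : Fin n)} else ∅)

variable {n d}

lemma fin_val_neg' {a : Fin n} (ha : a ≠ 0) : (-a).val = n - a.val := by
  have h0 : (a + (-a)).val = 0 := by simp
  rw [Fin.val_add] at h0
  have h1 : a.val < n := a.isLt
  have h2 : (-a).val < n := (-a).isLt
  have h3 : a.val ≠ 0 := fun h => ha (Fin.ext h)
  obtain ⟨k, hk⟩ := Nat.dvd_of_mod_eq_zero h0
  have hn0 : 0 < n := Nat.pos_of_ne_zero (NeZero.ne n)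
  have hk2 : k ≤ 1 := by nlinarith
  interval_cases k <;> omega

variable (hd : 4 ≤ d) (hnd : 2 * d < n) (hn2 : 2 ∣ n)
include hd hnd

lemma val_offF {k : ℕ} (hk : k < 2 * (d / 2)) :
    (offF n k).val = if k % 2 = 0 then k / 2 + 1 else n - (k / 2 + 1) := by
  have hb : k / 2 + 1 < n := by omega
  have hv : ((k / 2 + 1 : ℕ) : Fin n).val = k / 2 + 1 := by
    rw [Fin.val_natCast]; exact Nat.mod_eq_of_lt hb
  unfold offF
  by_cases hpar : k % 2 = 0
  · rw [if_pos hpar, if_pos hpar]; exact hv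
  · have hne : ((k / 2 + 1 : ℕ) : Fin n) ≠ 0 := by
      intro h
      have := congrArg Fin.val h
      rw [hv] at this
      simp at this
    rw [if_neg hpar, if_neg hpar, fin_val_neg' hne, hv]

lemma offF_injOn {k k' : ℕ} (hk : k < 2 * (d / 2)) (hk' : k' < 2 * (d / 2))
    (h : offF n k = offF n k') : k = k' := by
  have := congrArg Fin.val h
  rw [val_offF hd hnd hk, val_offF hd hnd hk'] at this
  split_ifs at this <;> omega

lemma val_half : ((n / 2 : ℕ) : Fin n).val = n / 2 := by
  rw [Fin.val_natCast]; exact Nat.mod_eq_of_lt (by omega)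

lemma half_not_mem : ((n / 2 : ℕ) : Fin n) ∉ (Finset.range (2 * (d / 2))).image (offF n) := by
  intro hmem
  obtain ⟨k, hk, hke⟩ := Finset.mem_image.mp hmem
  rw [Finset.mem_range] at hk
  have := congrArg Fin.val hke
  rw [val_offF hd hnd hk, val_half hd hnd] at this
  split_ifs at this <;> omega

lemma SS_card : (SS n d).card = d := by
  have hA : ((Finset.range (2 * (d / 2))).image (offF n)).card = 2 * (d / 2) := by
    rw [Finset.card_image_of_injOn, Finset.card_range]
    intro a ha b hb hab
    exact offF_injOn hd hnd (Finset.mem_range.mp ha) (Finset.mem_range.mp hb) hab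
  unfold SS
  by_cases hpar : d % 2 = 1
  · rw [if_pos hpar, Finset.card_union_of_disjoint, hA, Finset.card_singleton]
    · omega
    · simp only [Finset.disjoint_singleton_right]
      exact half_not_mem hd hnd
  · rw [if_neg hpar, Finset.union_empty, hA]; omega

lemma SS_zero_not_mem : (0 : Fin n) ∉ SS n d := by
  intro hmem
  unfold SS at hmem
  rcases Finset.mem_union.mp hmem with hA | hB
  · obtain ⟨k, hk, hke⟩ := Finset.mem_image.mp hA
    rw [Finset.mem_range] at hk
    have := congrArg Fin.val hke
    rw [val_offF hd hnd hk, Fin.val_zero] at this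
    split_ifs at this <;> omega
  · split_ifs at hB
    · rw [Finset.mem_singleton] at hB
      have := congrArg Fin.val hB
      rw [val_half hd hnd, Fin.val_zero] at this
      omega
    · simp at hB

lemma SS_one_mem : (1 : Fin n) ∈ SS n d := by
  have h0 : offF n 0 = (1 : Fin n) := by
    unfold offF; norm_num
  refine Finset.mem_union_left _ (Finset.mem_image.mpr ⟨0, ?_, h0⟩)
  rw [Finset.mem_range]; omega

include hn2 in
lemma SS_neg_mem {s : Fin n} (hs : s ∈ SS n d) : -s ∈ SS n d := by
  unfold SS at hs ⊢
  rcases Finset.mem_union.mp hs with hA | hB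
  · obtain ⟨k, hk, hke⟩ := Finset.mem_image.mp hA
    rw [Finset.mem_range] at hk
    refine Finset.mem_union_left _ (Finset.mem_image.mpr ?_)
    by_cases hpar : k % 2 = 0
    · refine ⟨k + 1, Finset.mem_range.mpr (by omega), ?_⟩
      rw [← hke]
      unfold offF
      have h1 : (k + 1) % 2 ≠ 0 := by omega
      have h2 : (k + 1) / 2 = k / 2 := by omega
      simp [hpar, h1, h2]
    · refine ⟨k - 1, Finset.mem_range.mpr (by omega), ?_⟩
      rw [← hke]
      unfold offF
      have h1 : (k - 1) % 2 = 0 := by omega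
      have h2 : (k - 1) / 2 = k / 2 := by omega
      simp [hpar, h1, h2]
  · split_ifs at hB with hodd
    · rw [Finset.mem_singleton] at hB
      subst hB
      refine Finset.mem_union_right _ ?_
      rw [if_pos hodd, Finset.mem_singleton]
      have hadd : ((n / 2 : ℕ) : Fin n) + ((n / 2 : ℕ) : Fin n) = 0 := by
        rw [← Nat.cast_add]
        have hhalf : n / 2 + n / 2 = n := by omega
        rw [hhalf, Fin.natCast_self]
      exact neg_eq_of_add_eq_zero_right hadd
    · simp at hB

end SSet

section Par

open Finset

variable {n d : ℕ} [NeZero n]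

lemma fin_parity_add (hn2 : 2 ∣ n) (a b : Fin n) :
    (a + b).val % 2 = (a.val + b.val) % 2 := by
  rw [Fin.val_add, Nat.mod_mod_of_dvd _ hn2]

lemma fin_parity_neg (hn2 : 2 ∣ n) (a : Fin n) :
    (-a).val % 2 = a.val % 2 := by
  by_cases ha : a = 0
  · simp [ha]
  · have h := fin_val_neg' ha
    have h1 : a.val < n := a.isLt
    have h3 : a.val ≠ 0 := fun h' => ha (Fin.ext h')
    omega

variable (hd : 4 ≤ d) (hnd : 2 * d < n) (hn2 : 2 ∣ n)
include hd hnd hn2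

lemma SS_even_card :
    d / 2 - 1 ≤ ((SS n d).filter (fun v => v.val % 2 = 0)).card := by
  have key : ∀ j < d / 2 - 1,
      offF n (4 * (j / 2) + 2 + j % 2) ∈ (SS n d).filter (fun v => v.val % 2 = 0) := by
    intro j hj
    set k := 4 * (j / 2) + 2 + j % 2 with hk
    have hkr : k < 2 * (d / 2) := by omega
    rw [Finset.mem_filter]
    constructor
    · exact Finset.mem_union_left _
        (Finset.mem_image.mpr ⟨k, Finset.mem_range.mpr hkr, rfl⟩)
    · rw [val_offF hd hnd hkr]
      have h2 : k / 2 = 2 * (j / 2) + 1 := by omega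
      split_ifs <;> omega
  calc d / 2 - 1 = (Finset.range (d / 2 - 1)).card := (Finset.card_range _).symm
    _ ≤ _ := by
        apply Finset.card_le_card_of_injOn (fun j => offF n (4 * (j / 2) + 2 + j % 2))
        · intro j hj; exact key j (Finset.mem_range.mp hj)
        · intro a ha b hb hab
          rw [Finset.mem_coe, Finset.mem_range] at ha hb
          have := offF_injOn hd hnd (k := 4 * (a / 2) + 2 + a % 2)
            (k' := 4 * (b / 2) + 2 + b % 2) (by omega) (by omega) hab
          omega

end Par

/-- **Theorem 4 (lower bound for stateless algorithms).** Let `d ≥ 4` and let `A` be a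
deterministic stateless algorithm given by `g(x) = (p⁰(x), p₁(x), …, p_d(x))` with
`p⁰(x) + Σᵢ pᵢ(x) = x` (a node with load `x` keeps `p⁰(x)` tokens and sends
`p₁(x), …, p_d(x)` along its `d` edges in some order). Then for every even `n > 2d`
there are a `d`-regular graph `G` on `n` vertices (no self-loops), an initial load
distribution and an execution of `A` on `G` — a bijective assignment, at each step and
node, of the values `p₁(x), …, p_d(x)` to the node's outgoing edges — whose discrepancy
at every time step equals `⌊d/2⌋ − 1`. -/
theorem stateless_lower_bound (d : ℕ) (hd : 4 ≤ d)
    (p0 : ℕ → ℕ) (p : Fin d → ℕ → ℕ)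
    (hsum : ∀ x : ℕ, p0 x + ∑ i : Fin d, p i x = x)
    (n : ℕ) (hn : Even n) (hnd : 2 * d < n) :
    ∃ S : LBSetup (Fin n), S.d = d ∧ S.dSelf = 0 ∧
      ∃ (x : ℕ → Fin n → ℕ) (f : ℕ → Fin n → Fin n → ℕ),
        -- at every step, the values `p₁(x_t(u)), …, p_d(x_t(u))` are assigned
        -- bijectively to the outgoing edges of `u`
        (∀ t, 1 ≤ t → ∀ u : Fin n,
          ∃ σ : {v : Fin n // S.Adj u v} ≃ Fin d,
            ∀ v : {v : Fin n // S.Adj u v}, f t u v.1 = p (σ v) (x t u)) ∧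
        -- the node keeps `p⁰(x_t(u))` tokens, and loads evolve accordingly
        (∀ t, 1 ≤ t → ∀ u : Fin n,
          x (t + 1) u = p0 (x t u) + ∑ v ∈ S.nbrs u, f t v u) ∧
        -- the discrepancy at every time step equals `⌊d/2⌋ − 1`
        (∀ t, 1 ≤ t → ∃ lo hi : ℕ,
          hi - lo = d / 2 - 1 ∧
          (∀ v : Fin n, lo ≤ x t v ∧ x t v ≤ hi) ∧
          (∃ v : Fin n, x t v = lo) ∧ (∃ v : Fin n, x t v = hi)) := by
  classical
  haveI : NeZero n := ⟨by omega⟩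
  have hn2 : 2 ∣ n := hn.two_dvd
  set L := d / 2 - 1 with hL
  set S0 := SS n d with hS0def
  have hcard : S0.card = d := SS_card hd hnd
  have h0 : (0 : Fin n) ∉ S0 := SS_zero_not_mem hd hnd
  have h1 : (1 : Fin n) ∈ S0 := SS_one_mem hd hnd
  have hneg : ∀ s ∈ S0, -s ∈ S0 := fun s hs => SS_neg_mem hd hnd hn2 hs
  -- the adjacency relation
  set Adj : Fin n → Fin n → Bool := fun u v => decide ((v - u) ∈ S0) with hAdjdef
  have hAdj_iff : ∀ u v : Fin n, Adj u v = true ↔ (v - u) ∈ S0 := by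
    intro u v; simp [hAdjdef]
  have hfilter : ∀ u : Fin n,
      (Finset.univ.filter fun v => Adj u v = true) = S0.image (u + ·) := by
    intro u
    ext v
    simp only [Finset.mem_filter, Finset.mem_univ, true_and, Finset.mem_image,
      hAdj_iff]
    constructor
    · intro hv; exact ⟨v - u, hv, by ring⟩
    · rintro ⟨s, hs, rfl⟩
      have : u + s - u = s := by ring
      rw [this]; exact hs
  have hsymm : ∀ u v : Fin n, Adj u v → Adj v u := by
    intro u v huv
    rw [hAdj_iff] at huv ⊢
    have hne : u - v = -(v - u) := by ring
    rw [hne]; exact hneg _ huv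
  have hloop : ∀ u : Fin n, ¬ Adj u u := by
    intro u hu
    rw [hAdj_iff] at hu
    rw [sub_self] at hu
    exact h0 hu
  have hreg : ∀ u : Fin n, (Finset.univ.filter fun v => Adj u v = true).card = d := by
    intro u
    rw [hfilter u, Finset.card_image_of_injective _ (add_right_injective u), hcard]
  have hconn : ∀ u v : Fin n, Relation.ReflTransGen (fun a b => Adj a b = true) u v := by
    have step : ∀ (u : Fin n) (k : ℕ),
        Relation.ReflTransGen (fun a b => Adj a b = true) u (u + (k : Fin n)) := by
      intro u k
      induction k with
      | zero => simpa using Relation.ReflTransGen.refl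
      | succ m ih =>
        refine ih.tail ?_
        rw [hAdj_iff]
        have he : (u + ((m + 1 : ℕ) : Fin n)) - (u + ((m : ℕ) : Fin n)) = 1 := by
          push_cast
          ring
        rw [he]; exact h1
    intro u v
    have hv : v = u + (((v - u).val : ℕ) : Fin n) := by
      rw [Fin.cast_val_eq_self]; ring
    rw [hv]
    exact step u _
  set G : LBSetup (Fin n) := ⟨d, 0, Adj, hsymm, hloop, hreg, hconn⟩ with hGdef
  -- loads
  set x : ℕ → Fin n → ℕ := fun _ u => if u.val % 2 = 0 then L else 0 with hxdef
  -- the equivalence sending odd offsets to zero-flow indices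
  have hcardS : Fintype.card {o : Fin n // o ∈ S0} = d := by
    rw [Fintype.card_coe]; exact hcard
  have hZ1 : (Finset.univ.filter fun i : Fin d => ¬ p i L = 0).card ≤ L := by
    have hsumL := hsum L
    calc (Finset.univ.filter fun i : Fin d => ¬ p i L = 0).card
        = ∑ _i ∈ Finset.univ.filter (fun i : Fin d => ¬ p i L = 0), 1 := by
          rw [Finset.card_eq_sum_ones]
      _ ≤ ∑ i ∈ Finset.univ.filter (fun i : Fin d => ¬ p i L = 0), p i L := by
          refine Finset.sum_le_sum ?_
          intro i hi
          have := (Finset.mem_filter.mp hi).2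
          omega
      _ ≤ ∑ i : Fin d, p i L :=
          Finset.sum_le_sum_of_subset (Finset.filter_subset _ _)
      _ ≤ L := by omega
  have hSodd : (Finset.univ.filter fun o : {o : Fin n // o ∈ S0} =>
      ¬ (o : Fin n).val % 2 = 0).card
      ≤ (Finset.univ.filter fun i : Fin d => p i L = 0).card := by
    have e1 : (Finset.univ.filter fun o : {o : Fin n // o ∈ S0} =>
        ¬ (o : Fin n).val % 2 = 0).card
        = (S0.filter fun v => ¬ v.val % 2 = 0).card := by
      rw [Finset.univ_eq_attach]
      refine Finset.card_bij (fun o _ => (o : Fin n)) ?_ ?_ ?_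
      · intro a ha
        rw [Finset.mem_filter] at ha ⊢
        exact ⟨a.2, ha.2⟩
      · intro a _ b _ hab
        exact Subtype.ext hab
      · intro b hb
        rw [Finset.mem_filter] at hb
        exact ⟨⟨b, hb.1⟩, Finset.mem_filter.mpr ⟨Finset.mem_attach _ _, hb.2⟩, rfl⟩
    have e2 : (S0.filter fun v => v.val % 2 = 0).card
        + (S0.filter fun v => ¬ v.val % 2 = 0).card = d := by
      rw [Finset.card_filter_add_card_filter_not, hcard]
    have e3 : L ≤ (S0.filter fun v => v.val % 2 = 0).card :=
      SS_even_card hd hnd hn2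
    have e4 : (Finset.univ.filter fun i : Fin d => p i L = 0).card
        + (Finset.univ.filter fun i : Fin d => ¬ p i L = 0).card = d := by
      rw [Finset.card_filter_add_card_filter_not, Finset.card_univ,
        Fintype.card_fin]
    rw [e1]
    omega
  obtain ⟨σ₀, hσ₀⟩ := exists_equiv_cond hcardS
    (fun o => ¬ (o : Fin n).val % 2 = 0) (fun i => p i L = 0) hSodd
  -- flows
  set qv : Fin n → ℕ := fun o => if ho : o ∈ S0 then p (σ₀ ⟨o, ho⟩) L else 0
    with hqvdef
  set f : ℕ → Fin n → Fin n → ℕ :=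
    fun _ u v => if u.val % 2 = 0 ∧ (v - u) ∈ S0 then qv (v - u) else 0 with hfdef
  have hq_odd : ∀ o : Fin n, ¬ o.val % 2 = 0 → qv o = 0 := by
    intro o ho
    simp only [hqvdef]
    by_cases hmem : o ∈ S0
    · rw [dif_pos hmem]
      exact hσ₀ ⟨o, hmem⟩ ho
    · rw [dif_neg hmem]
  have hq_sum : ∑ o ∈ S0, qv o = ∑ i : Fin d, p i L := by
    rw [← Finset.sum_attach S0 qv, ← Finset.univ_eq_attach,
      ← Equiv.sum_comp σ₀ (fun i => p i L)]
    refine Finset.sum_congr rfl ?_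
    intro o _
    show qv o.1 = p (σ₀ o) L
    simp only [hqvdef]
    rw [dif_pos o.2]
  have hSimage : S0.image (fun s => -s) = S0 := by
    apply Finset.Subset.antisymm
    · intro v hv
      obtain ⟨s, hs, rfl⟩ := Finset.mem_image.mp hv
      exact hneg s hs
    · intro v hv
      refine Finset.mem_image.mpr ⟨-v, hneg v hv, neg_neg v⟩
  have hnbrs : ∀ u : Fin n, G.nbrs u = S0.image (u + ·) := by
    intro u
    rw [LBSetup.nbrs]
    exact hfilter u
  have hterm : ∀ (t : ℕ) (u o : Fin n), o ∈ S0 →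
      f t (u + o) u = if (u.val + o.val) % 2 = 0 then qv (-o) else 0 := by
    intro t u o ho
    have hsub : u - (u + o) = -o := by ring
    rw [hfdef]
    show (if (u + o).val % 2 = 0 ∧ (u - (u + o)) ∈ S0 then qv (u - (u + o)) else 0)
      = if (u.val + o.val) % 2 = 0 then qv (-o) else 0
    rw [hsub]
    have hpar : (u + o).val % 2 = (u.val + o.val) % 2 := fin_parity_add hn2 u o
    by_cases hc : (u.val + o.val) % 2 = 0
    · rw [if_pos ⟨by rw [hpar]; exact hc, hneg o ho⟩, if_pos hc]
    · rw [if_neg, if_neg hc]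
      rintro ⟨hh, -⟩
      rw [hpar] at hh
      exact hc hh
  have hmain : ∀ (t : ℕ) (u : Fin n),
      p0 (x t u) + ∑ v ∈ G.nbrs u, f t v u = (if u.val % 2 = 0 then L else 0) := by
    intro t u
    have hsum_image : ∑ v ∈ G.nbrs u, f t v u = ∑ o ∈ S0, f t (u + o) u := by
      rw [hnbrs u, Finset.sum_image]
      intro a _ b _ hab
      exact add_right_injective u hab
    rw [hsum_image]
    by_cases hu : u.val % 2 = 0
    · have e1 : ∑ o ∈ S0, f t (u + o) u = ∑ o ∈ S0, qv (-o) := by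
        refine Finset.sum_congr rfl ?_
        intro o ho
        rw [hterm t u o ho]
        by_cases hoe : o.val % 2 = 0
        · rw [if_pos (by omega)]
        · rw [if_neg (by omega),
            hq_odd (-o) (by rw [fin_parity_neg hn2]; exact hoe)]
      have e2 : ∑ o ∈ S0, qv (-o) = ∑ o ∈ S0, qv o := by
        refine Finset.sum_nbij' (fun o => -o) (fun o => -o) ?_ ?_ ?_ ?_ ?_
        · intro a ha; exact hneg a ha
        · intro a ha; exact hneg a ha
        · intro a _; exact neg_neg a
        · intro a _; exact neg_neg a
        · intro a _; rfl
      rw [e1, e2, hq_sum, if_pos hu]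
      have hxu : x t u = L := by simp only [hxdef]; exact if_pos hu
      rw [hxu]
      exact hsum L
    · have e1 : ∑ o ∈ S0, f t (u + o) u = 0 := by
        refine Finset.sum_eq_zero ?_
        intro o ho
        rw [hterm t u o ho]
        by_cases hoe : o.val % 2 = 0
        · rw [if_neg (by omega)]
        · rw [if_pos (by omega)]
          exact hq_odd (-o) (by rw [fin_parity_neg hn2]; exact hoe)
      rw [e1, if_neg hu]
      have hxu : x t u = 0 := by simp only [hxdef]; exact if_neg hu
      rw [hxu]
      have h00 := hsum 0
      omega
  have hp00 : ∀ i : Fin d, p i 0 = 0 := by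
    intro i
    have h00 := hsum 0
    have hle : p i 0 ≤ ∑ i : Fin d, p i 0 :=
      Finset.single_le_sum (f := fun i => p i 0) (fun _ _ => Nat.zero_le _)
        (Finset.mem_univ i)
    omega
  refine ⟨G, rfl, rfl, x, f, ?_, ?_, ?_⟩
  · -- bijective assignment
    intro t _ u
    by_cases hu : u.val % 2 = 0
    · have hmemAdj : ∀ v : Fin n, G.Adj u v = true ↔ (v - u) ∈ S0 := hAdj_iff u
      have hback : ∀ o : {o : Fin n // o ∈ S0}, G.Adj u (u + o.1) = true := by
        intro o
        rw [hmemAdj]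
        have he : u + o.1 - u = o.1 := by ring
        rw [he]; exact o.2
      let ν : {v : Fin n // G.Adj u v} ≃ {o : Fin n // o ∈ S0} :=
        { toFun := fun v => ⟨v.1 - u, (hmemAdj v.1).mp v.2⟩
          invFun := fun o => ⟨u + o.1, hback o⟩
          left_inv := fun v => Subtype.ext (by show u + (v.1 - u) = v.1; ring)
          right_inv := fun o => Subtype.ext (by show u + o.1 - u = o.1; ring) }
      refine ⟨ν.trans σ₀, ?_⟩
      intro v
      have hxu : x t u = L := by simp only [hxdef]; exact if_pos hu
      have hmem : (v.1 - u) ∈ S0 := (hmemAdj v.1).mp v.2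
      rw [hxu, hfdef]
      show (if u.val % 2 = 0 ∧ (v.1 - u) ∈ S0 then qv (v.1 - u) else 0)
        = p ((ν.trans σ₀) v) L
      rw [if_pos ⟨hu, hmem⟩]
      simp only [hqvdef]
      rw [dif_pos hmem]
      rfl
    · have hcardv : Fintype.card {v : Fin n // G.Adj u v} = d := by
        rw [Fintype.card_subtype]
        exact hreg u
      refine ⟨Fintype.equivFinOfCardEq hcardv, ?_⟩
      intro v
      have hxu : x t u = 0 := by simp only [hxdef]; exact if_neg hu
      rw [hxu, hfdef]
      show (if u.val % 2 = 0 ∧ (v.1 - u) ∈ S0 then qv (v.1 - u) else 0)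
        = p ((Fintype.equivFinOfCardEq hcardv) v) 0
      rw [if_neg (by rintro ⟨hh, -⟩; exact hu hh), hp00]
  · -- conservation
    intro t _ u
    have hx1 : x (t + 1) u = (if u.val % 2 = 0 then L else 0) := by simp only [hxdef]
    rw [hx1]
    exact (hmain t u).symm
  · -- discrepancy
    intro t _
    refine ⟨0, L, by omega, ?_, ?_, ?_⟩
    · intro v
      simp only [hxdef]
      constructor
      · exact Nat.zero_le _
      · split_ifs <;> omega
    · refine ⟨((1 : ℕ) : Fin n), ?_⟩
      simp only [hxdef]
      have hv1 : (((1 : ℕ) : Fin n)).val = 1 := by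
        rw [Fin.val_natCast]
        exact Nat.mod_eq_of_lt (by omega)
      rw [if_neg (by rw [hv1]; omega)]
    · refine ⟨(0 : Fin n), ?_⟩
      simp only [hxdef]
      rw [if_pos (by simp)]
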